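/- Let (d, Q, E) be a VASS, C, C' ⊆ {1,…,d}, q, q' ∈ Q, v ∈ ℕ^C, v' ∈ ℕ^{C'}, and suppose (Θ1): for every m ≥ 1 there exist v̄ ∈ (ℕ≥m)^{C̄}, v̄' ∈ (ℕ≥m)^{C̄'} and a pseudo-run from (q, v ⊕ v̄) to (q', v' ⊕ v̄') traversing every arc at least m times. Then there exist v̄ ∈ ℕ^{C̄}, v̄' ∈ ℕ^{C̄'} and a pseudo-run π₀ from (q, v ⊕ v̄) to (q', v' ⊕ v̄') such that for every m > 0 there exist δ̄ ∈ ℕ^{C̄} with δ̄ ≥ m, δ̄' ∈ ℕ^{C̄'} with δ̄' ≥ m, and a pseudo-run π₁ from (q, v ⊕ (v̄ + δ̄)) to (q', v' ⊕ (v̄' + δ̄')) with fold(π₁) − fold(π₀) ≥ m on every arc of E. -/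

import Mathlib

/-- Vectors in `ℤ^d`. -/
abbrev Vec (d : ℕ) : Type := Fin d → ℤ

/-- An arc of a `d`-dimensional VASS with states `Q`. -/
abbrev Arc (Q : Type) (d : ℕ) : Type := Q × Vec d × Q

/-- `IsRunOn E S π q v q' v'`: the list of arcs `π` (all belonging to `E`) forms a
pseudo-run from `(q, v)` to `(q', v')`, all of whose vectors (including endpoints)
are nonnegative on every coordinate in `S`.  Taking `S = ∅` gives pseudo-runs,
`S = Set.univ` gives runs, and `S = ↑C` gives `C`-runs. -/
inductive IsRunOn {Q : Type} {d : ℕ} (E : Finset (Arc Q d)) (S : Set (Fin d)) :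
    List (Arc Q d) → Q → Vec d → Q → Vec d → Prop
  | nil (q : Q) (v : Vec d) (hv : ∀ i ∈ S, 0 ≤ v i) :
      IsRunOn E S [] q v q v
  | cons (q q' q'' : Q) (v v'' z : Vec d) (π : List (Arc Q d))
      (hv : ∀ i ∈ S, 0 ≤ v i) (he : (q, z, q') ∈ E)
      (ht : IsRunOn E S π q' (v + z) q'' v'') :
      IsRunOn E S ((q, z, q') :: π) q v q'' v''

/-- Glueing: `glue C v w` agrees with `v` on coordinates in `C` and with `w` outside `C`. -/
def glue {d : ℕ} (C : Finset (Fin d)) (v w : Vec d) : Vec d :=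
  fun i => if i ∈ C then v i else w i

/-- Claim 2: from `Θ1` one can choose a base pseudo-run `π₀` such that for
every `m > 0` there is a pseudo-run `π₁` shifted by `δ̄, δ̄' ≥ m` on the unconstrained
coordinates, whose folding exceeds that of `π₀` by at least `m` on every arc. -/
theorem claim_linear {d : ℕ} {Q : Type} [DecidableEq Q]
    (hd : 1 ≤ d) (E : Finset (Arc Q d)) (C C' : Finset (Fin d))
    (q q' : Q) (v v' : Vec d)
    (hv : ∀ i ∈ C, 0 ≤ v i) (hv' : ∀ i ∈ C', 0 ≤ v' i)
    (h1 : ∀ m : ℕ, 1 ≤ m → ∃ vb vb' : Vec d,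
      (∀ i ∉ C, (m : ℤ) ≤ vb i) ∧ (∀ i ∉ C', (m : ℤ) ≤ vb' i) ∧
      ∃ π, IsRunOn E ∅ π q (glue C v vb) q' (glue C' v' vb') ∧
        ∀ e ∈ E, m ≤ π.count e) :
    ∃ vb vb' : Vec d, (∀ i ∉ C, 0 ≤ vb i) ∧ (∀ i ∉ C', 0 ≤ vb' i) ∧
      ∃ π₀, IsRunOn E ∅ π₀ q (glue C v vb) q' (glue C' v' vb') ∧
        ∀ m : ℕ, 0 < m → ∃ δb δb' : Vec d,
          (∀ i ∉ C, (m : ℤ) ≤ δb i) ∧ (∀ i ∉ C', (m : ℤ) ≤ δb' i) ∧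
          ∃ π₁, IsRunOn E ∅ π₁ q (glue C v (vb + δb)) q' (glue C' v' (vb' + δb')) ∧
            ∀ e ∈ E, π₀.count e + m ≤ π₁.count e := by
  obtain ⟨vb, vb', hvb, hvb', π₀, hπ₀, _⟩ := h1 1 le_rfl
  refine ⟨vb, vb', fun i hi => le_trans (by norm_num) (hvb i hi),
    fun i hi => le_trans (by norm_num) (hvb' i hi), π₀, hπ₀, fun m hm => ?_⟩
  set N : ℕ := Finset.univ.sup (fun i : Fin d => (vb i).toNat ⊔ (vb' i).toNat) with hN
  have hNb : ∀ i, vb i ≤ (N : ℤ) ∧ vb' i ≤ (N : ℤ) := by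
    intro i
    have h := Finset.le_sup (f := fun i : Fin d => (vb i).toNat ⊔ (vb' i).toNat)
      (Finset.mem_univ i)
    constructor
    · calc vb i ≤ ((vb i).toNat : ℤ) := Int.self_le_toNat _
        _ ≤ (N : ℤ) := by exact_mod_cast le_trans (le_max_left _ _) h
    · calc vb' i ≤ ((vb' i).toNat : ℤ) := Int.self_le_toNat _
        _ ≤ (N : ℤ) := by exact_mod_cast le_trans (le_max_right _ _) h
  obtain ⟨w, w', hw, hw', π₁, hπ₁, hcount⟩ := h1 (m + N + π₀.length)
    (le_trans hm (by omega))
  refine ⟨w - vb, w' - vb', ?_, ?_, π₁, ?_, ?_⟩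
  · intro i hi
    have := hw i hi
    have := (hNb i).1
    simp only [Pi.sub_apply]
    push_cast at this ⊢
    omega
  · intro i hi
    have := hw' i hi
    have := (hNb i).2
    simp only [Pi.sub_apply]
    push_cast
    have h1 := hw' i hi; push_cast at h1
    omega
  · have : vb + (w - vb) = w := by ring
    have h2 : vb' + (w' - vb') = w' := by ring
    rw [this, h2]; exact hπ₁
  · intro e he
    have h3 := hcount e he
    have h4 : π₀.count e ≤ π₀.length := List.count_le_length
    omega
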